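/- Let ψ₁ : ℝ → ℝ be a C² function such that ψ₁ and its derivatives are bounded, and let φ₀(z) = (1 + tanh(3z))/2. Then ∫_{−∞}^{∞} φ₀'(z) [ψ₁''(z) − W''(φ₀(z)) ψ₁(z)] dz = 0, where W(u) = 18u²(1−u)². -/

import Mathlib

open Real MeasureTheory Set

lemma my_hasDerivAt_tanh (x : ℝ) : HasDerivAt Real.tanh (1 - Real.tanh x ^ 2) x := by
  have h := (Real.hasDerivAt_sinh x).div (Real.hasDerivAt_cosh x) (Real.cosh_pos x).ne'
  have he : Real.tanh = fun x => Real.sinh x / Real.cosh x :=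
    funext fun x => Real.tanh_eq_sinh_div_cosh x
  rw [he]
  refine h.congr_deriv ?_
  have hc := (Real.cosh_pos x).ne'
  have hs := Real.cosh_sq_sub_sinh_sq x
  field_simp

lemma tanh_sq_le_one (x : ℝ) : Real.tanh x ^ 2 ≤ 1 := by
  rw [Real.tanh_eq_sinh_div_cosh, div_pow, div_le_one (by positivity)]
  nlinarith [Real.cosh_sq_sub_sinh_sq x]

lemma sech_sq_le (x : ℝ) : 1 - Real.tanh x ^ 2 ≤ 4 * Real.exp (-2 * |x|) := by
  have hc := Real.cosh_pos x
  have h1 : Real.exp |x| ≤ 2 * Real.cosh x := by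
    rw [Real.cosh_eq]
    rcases abs_cases x with ⟨h, _⟩ | ⟨h, _⟩ <;> rw [h] <;>
      nlinarith [Real.exp_pos x, Real.exp_pos (-x)]
  have h2 : 1 - Real.tanh x ^ 2 = (Real.cosh x ^ 2)⁻¹ := by
    rw [Real.tanh_eq_sinh_div_cosh, div_pow]
    field_simp
    linarith [Real.cosh_sq_sub_sinh_sq x]
  have h3 : Real.exp (-2 * |x|) = ((Real.exp |x|) ^ 2)⁻¹ := by
    rw [← Real.exp_nat_mul, ← Real.exp_neg]
    norm_num
  rw [h2, h3]
  have h4 : Real.exp |x| ^ 2 ≤ 4 * Real.cosh x ^ 2 := by nlinarith [Real.exp_pos |x|]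
  calc (Real.cosh x ^ 2)⁻¹ ≤ 4 * (4 * Real.cosh x ^ 2)⁻¹ := by
        rw [mul_inv]
        nlinarith [mul_pos hc hc, inv_pos.2 (mul_pos hc hc)]
    _ ≤ 4 * (Real.exp |x| ^ 2)⁻¹ := by gcongr

/-- exp (-6|z|) is integrable on ℝ. -/
lemma integrable_exp_neg_six_abs : Integrable (fun z : ℝ => Real.exp (-6 * |z|)) := by
  have hm : AEStronglyMeasurable (fun z : ℝ => Real.exp (-6 * |z|)) volume :=
    (Real.continuous_exp.comp ((continuous_const.mul continuous_abs))).aestronglyMeasurable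
  rw [← integrableOn_univ, ← Set.Iic_union_Ioi (a := (0:ℝ))]
  apply IntegrableOn.union
  · -- on Iic 0, dominated by exp z
    apply Integrable.mono' (integrableOn_exp_Iic 0) hm.restrict
    filter_upwards [ae_restrict_mem measurableSet_Iic] with z hz
    rw [Real.norm_eq_abs, abs_of_pos (Real.exp_pos _)]
    apply Real.exp_le_exp.2
    rw [abs_of_nonpos hz]
    linarith [hz.out]
  · -- on Ioi 0, dominated by exp (-z)
    apply Integrable.mono' (exp_neg_integrableOn_Ioi 0 (zero_lt_one)) hm.restrict
    filter_upwards [ae_restrict_mem measurableSet_Ioi] with z hz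
    rw [Real.norm_eq_abs, abs_of_pos (Real.exp_pos _)]
    apply Real.exp_le_exp.2
    rw [abs_of_pos hz.out]
    linarith [hz.out]

noncomputable def W : ℝ → ℝ := fun u => 18 * u ^ 2 * (1 - u) ^ 2

noncomputable def phi0 : ℝ → ℝ := fun z => (1 + Real.tanh (3 * z)) / 2

theorem solvability_condition (ψ₁ : ℝ → ℝ) (hψ : ContDiff ℝ 2 ψ₁)
    (hb0 : ∃ M, ∀ z, |ψ₁ z| ≤ M)
    (hb1 : ∃ M, ∀ z, |deriv ψ₁ z| ≤ M)
    (hb2 : ∃ M, ∀ z, |deriv (deriv ψ₁) z| ≤ M) :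
    ∫ z : ℝ, deriv phi0 z *
      (deriv (deriv ψ₁) z - deriv (deriv W) (phi0 z) * ψ₁ z) = 0 := by
  obtain ⟨M0, hM0⟩ := hb0
  obtain ⟨M1, hM1⟩ := hb1
  obtain ⟨M2, hM2⟩ := hb2
  set T : ℝ → ℝ := fun z => Real.tanh (3 * z) with hT_def
  -- derivative of T
  have hT : ∀ z, HasDerivAt T (3 * (1 - T z ^ 2)) z := by
    intro z
    have h := HasDerivAt.comp z (my_hasDerivAt_tanh (3 * z)) ((hasDerivAt_id z).const_mul 3)
    have h2 : HasDerivAt T ((1 - T z ^ 2) * (3 * 1)) z := h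
    convert h2 using 1
    ring
  -- first derivative of phi0
  have hphi : ∀ z, HasDerivAt phi0 (3 * (1 - T z ^ 2) / 2) z := by
    intro z
    have h := ((hT z).const_add 1).div_const 2
    exact h
  have dphi : deriv phi0 = fun z => 3 * (1 - T z ^ 2) / 2 :=
    funext fun z => (hphi z).deriv
  -- second derivative of phi0
  have hp : ∀ z, HasDerivAt (fun z => 3 * (1 - T z ^ 2) / 2)
      (-9 * T z * (1 - T z ^ 2)) z := by
    intro z
    have h := ((((hT z).pow 2).const_sub 1).const_mul 3).div_const 2
    refine h.congr_deriv ?_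
    ring
  -- third derivative of phi0
  have hq : ∀ z, HasDerivAt (fun z => -9 * T z * (1 - T z ^ 2))
      (-27 * (1 - T z ^ 2) * (1 - 3 * T z ^ 2)) z := by
    intro z
    have h := (((hT z).const_mul (-9)).mul (((hT z).pow 2).const_sub 1))
    refine h.congr_deriv ?_
    rw [Pi.pow_apply]
    ring
  -- W second derivative
  have hW1 : ∀ u : ℝ, HasDerivAt W (36 * u - 108 * u ^ 2 + 72 * u ^ 3) u := by
    intro u
    have h := ((hasDerivAt_pow 2 u).const_mul (18:ℝ)).mul
      (((hasDerivAt_id u).const_sub (1:ℝ)).pow 2)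
    refine h.congr_deriv ?_
    simp
    ring
  have dW : deriv W = fun u => 36 * u - 108 * u ^ 2 + 72 * u ^ 3 :=
    funext fun u => (hW1 u).deriv
  have hW2 : ∀ u : ℝ, HasDerivAt (deriv W) (36 - 216 * u + 216 * u ^ 2) u := by
    intro u
    rw [dW]
    have h := (((hasDerivAt_id u).const_mul (36:ℝ)).sub
      ((hasDerivAt_pow 2 u).const_mul (108:ℝ))).add ((hasDerivAt_pow 3 u).const_mul (72:ℝ))
    refine h.congr_deriv ?_
    simp
    ring
  have ddW : deriv (deriv W) = fun u => 36 - 216 * u + 216 * u ^ 2 :=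
    funext fun u => (hW2 u).deriv
  -- ψ₁ facts
  have hψd : Differentiable ℝ ψ₁ := hψ.differentiable (by norm_num)
  have hcd1 : ContDiff ℝ 1 (deriv ψ₁) := by
    have h := (contDiff_succ_iff_deriv (n := 1)).mp (by exact_mod_cast hψ)
    exact h.2.2
  have hd1 : ∀ z, HasDerivAt ψ₁ (deriv ψ₁ z) z := fun z => (hψd z).hasDerivAt
  have hd2 : ∀ z, HasDerivAt (deriv ψ₁) (deriv (deriv ψ₁) z) z :=
    fun z => (hcd1.differentiable one_ne_zero z).hasDerivAt
  have hc1 : Continuous (deriv ψ₁) := hcd1.continuous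
  have hc2 : Continuous (deriv (deriv ψ₁)) := by
    have h := (contDiff_succ_iff_deriv (n := 0)).mp (by exact_mod_cast hcd1)
    exact h.2.2.continuous
  -- the antiderivative
  set F : ℝ → ℝ := fun z =>
    3 * (1 - T z ^ 2) / 2 * deriv ψ₁ z - (-9 * T z * (1 - T z ^ 2)) * ψ₁ z with hF_def
  set G : ℝ → ℝ := fun z =>
    3 * (1 - T z ^ 2) / 2 * deriv (deriv ψ₁) z
      - (-27 * (1 - T z ^ 2) * (1 - 3 * T z ^ 2)) * ψ₁ z with hG_def
  have hF : ∀ z, HasDerivAt F (G z) z := by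
    intro z
    have h := ((hp z).mul (hd2 z)).sub ((hq z).mul (hd1 z))
    refine h.congr_deriv ?_
    simp only [hG_def]
    ring
  -- bounds
  have hTc : Continuous T := continuous_iff_continuousAt.2 fun z => (hT z).continuousAt
  have hsech : ∀ z : ℝ, 1 - T z ^ 2 ≤ 4 * Real.exp (-6 * |z|) := by
    intro z
    have h := sech_sq_le (3 * z)
    have : |3 * z| = 3 * |z| := by rw [abs_mul]; norm_num
    rw [this] at h
    convert h using 3
    ring
  have hsech0 : ∀ z : ℝ, 0 ≤ 1 - T z ^ 2 := fun z => by
    have := tanh_sq_le_one (3 * z); simp only [hT_def]; linarith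
  have hTle : ∀ z : ℝ, |T z| ≤ 1 := fun z => by
    have h := tanh_sq_le_one (3 * z)
    have h2 : |T z| ^ 2 ≤ 1 := by rw [sq_abs]; exact h
    nlinarith [abs_nonneg (T z)]
  have hM0' : 0 ≤ M0 := le_trans (abs_nonneg _) (hM0 0)
  have hM1' : 0 ≤ M1 := le_trans (abs_nonneg _) (hM1 0)
  have hM2' : 0 ≤ M2 := le_trans (abs_nonneg _) (hM2 0)
  have hGint : Integrable G := by
    apply Integrable.mono' (integrable_exp_neg_six_abs.const_mul (6 * M2 + 216 * M0))
    · apply Continuous.aestronglyMeasurable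
      have hs : Continuous (fun z => 1 - T z ^ 2) := continuous_const.sub (hTc.pow 2)
      exact (((continuous_const.mul hs).div_const 2).mul hc2).sub
        (((((continuous_const.mul hs).mul (continuous_const.sub (continuous_const.mul (hTc.pow 2)))))).mul
          hψ.continuous)
    · apply ae_of_all
      intro z
      have hA : |3 * (1 - T z ^ 2) / 2 * deriv (deriv ψ₁) z|
          ≤ 6 * Real.exp (-6 * |z|) * M2 := by
        rw [abs_mul]
        apply mul_le_mul ?_ (hM2 z) (abs_nonneg _) (by positivity)
        rw [abs_of_nonneg (by linarith [hsech0 z] : (0:ℝ) ≤ 3 * (1 - T z ^ 2) / 2)]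
        linarith [hsech z]
      have hB : |(-27 * (1 - T z ^ 2) * (1 - 3 * T z ^ 2)) * ψ₁ z|
          ≤ 216 * Real.exp (-6 * |z|) * M0 := by
        rw [abs_mul]
        apply mul_le_mul ?_ (hM0 z) (abs_nonneg _) (by positivity)
        rw [abs_mul, abs_mul]
        have h1 : |(-27 : ℝ)| = 27 := by norm_num
        have h2 : |1 - T z ^ 2| = 1 - T z ^ 2 := abs_of_nonneg (hsech0 z)
        have h3 : |1 - 3 * T z ^ 2| ≤ 2 := by
          rw [abs_le]
          constructor <;> nlinarith [hsech0 z, sq_nonneg (T z)]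
        rw [h1, h2]
        nlinarith [hsech z, hsech0 z, abs_nonneg (1 - 3 * T z ^ 2),
          Real.exp_pos (-6 * |z|)]
      rw [Real.norm_eq_abs]
      calc |G z| ≤ |3 * (1 - T z ^ 2) / 2 * deriv (deriv ψ₁) z|
            + |(-27 * (1 - T z ^ 2) * (1 - 3 * T z ^ 2)) * ψ₁ z| := abs_sub _ _
        _ ≤ 6 * Real.exp (-6 * |z|) * M2 + 216 * Real.exp (-6 * |z|) * M0 :=
            add_le_add hA hB
        _ = (6 * M2 + 216 * M0) * Real.exp (-6 * |z|) := by ring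
  have hFint : Integrable F := by
    apply Integrable.mono' (integrable_exp_neg_six_abs.const_mul (6 * M1 + 36 * M0))
    · apply Continuous.aestronglyMeasurable
      have hs : Continuous (fun z => 1 - T z ^ 2) := continuous_const.sub (hTc.pow 2)
      exact (((continuous_const.mul hs).div_const 2).mul hc1).sub
        (((continuous_const.mul hTc).mul hs).mul hψ.continuous)
    · apply ae_of_all
      intro z
      have hA : |3 * (1 - T z ^ 2) / 2 * deriv ψ₁ z|
          ≤ 6 * Real.exp (-6 * |z|) * M1 := by
        rw [abs_mul]
        apply mul_le_mul ?_ (hM1 z) (abs_nonneg _) (by positivity)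
        rw [abs_of_nonneg (by linarith [hsech0 z] : (0:ℝ) ≤ 3 * (1 - T z ^ 2) / 2)]
        linarith [hsech z]
      have hB : |(-9 * T z * (1 - T z ^ 2)) * ψ₁ z|
          ≤ 36 * Real.exp (-6 * |z|) * M0 := by
        rw [abs_mul]
        apply mul_le_mul ?_ (hM0 z) (abs_nonneg _) (by positivity)
        rw [abs_mul, abs_mul]
        have h1 : |(-9 : ℝ)| = 9 := by norm_num
        have h2 : |1 - T z ^ 2| = 1 - T z ^ 2 := abs_of_nonneg (hsech0 z)
        rw [h1, h2]
        nlinarith [hsech z, hsech0 z, hTle z, abs_nonneg (T z),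
          Real.exp_pos (-6 * |z|)]
      rw [Real.norm_eq_abs]
      calc |F z| ≤ |3 * (1 - T z ^ 2) / 2 * deriv ψ₁ z|
            + |(-9 * T z * (1 - T z ^ 2)) * ψ₁ z| := abs_sub _ _
        _ ≤ 6 * Real.exp (-6 * |z|) * M1 + 36 * Real.exp (-6 * |z|) * M0 :=
            add_le_add hA hB
        _ = (6 * M1 + 36 * M0) * Real.exp (-6 * |z|) := by ring
  have key : (fun z : ℝ => deriv phi0 z *
      (deriv (deriv ψ₁) z - deriv (deriv W) (phi0 z) * ψ₁ z)) = G := by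
    funext z
    simp only [dphi, ddW, hG_def, phi0, hT_def]
    ring
  rw [key]
  exact integral_eq_zero_of_hasDerivAt_of_integrable hF hGint hFint
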